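/- The Bass stable rank of A(p) equals 1: for all f₁, f₂, g₁, g₂ ∈ A(p) satisfying g₁∗f₁ + g₂∗f₂ = ε, there exists h ∈ A(p) such that f₁ + h∗f₂ is invertible in A(p). -/

import Mathlib

open scoped BigOperators

/-- The complex absolute value (removed from Mathlib), with its old definition. -/
noncomputable def Complex.abs : AbsoluteValue ℂ ℝ where
  toFun x := Real.sqrt (Complex.normSq x)
  map_mul' x y := by rw [map_mul, Real.sqrt_mul (Complex.normSq_nonneg _)]
  nonneg' x := Real.sqrt_nonneg _
  eq_zero' x := by rw [Real.sqrt_eq_zero (Complex.normSq_nonneg _), Complex.normSq_eq_zero]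
  add_le' x y := by
    have h : ∀ z : ℂ, Real.sqrt (Complex.normSq z) = ‖z‖ := fun z => by
      rw [Complex.norm_def]
    simp only [h]; exact norm_add_le x y

theorem Complex.norm_eq_abs (z : ℂ) : ‖z‖ = Complex.abs z := by
  show ‖z‖ = Real.sqrt (Complex.normSq z)
  rw [Complex.norm_def]

theorem Complex.abs_ofReal (r : ℝ) : Complex.abs (r : ℂ) = |r| := by
  rw [← Complex.norm_eq_abs, Complex.norm_real, Real.norm_eq_abs]

/-- A weight: a sequence of positive reals. -/
structure GoodWeight : Type where
  p : ℕ → ℝ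
  pos : ∀ n, 0 < p n

namespace GoodWeight

/-- The growth condition `lim_{n→∞} p(n)^(1/n) = ∞`. -/
def Grows (w : GoodWeight) : Prop :=
  Filter.Tendsto (fun n : ℕ => w.p n ^ ((n : ℝ)⁻¹)) Filter.atTop Filter.atTop

/-- The Banach algebra `A(p)`, in its sequence model: a sequence `a : ℕ → ℂ` (the
Taylor coefficients at `0` of the corresponding entire function) such that
`sup_n p(n)|a(n)| < ∞`. -/
def Ap (w : GoodWeight) : Type :=
  {a : ℕ → ℂ // ∃ C : ℝ, ∀ n, w.p n * Complex.abs (a n) ≤ C}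

namespace Ap

variable {w : GoodWeight}

instance : Zero w.Ap :=
  ⟨⟨fun _ => 0, 0, fun n => by simp⟩⟩

instance : Add w.Ap :=
  ⟨fun a b =>
    ⟨fun n => a.1 n + b.1 n, by
      obtain ⟨C, hC⟩ := a.2
      obtain ⟨D, hD⟩ := b.2
      refine ⟨C + D, fun n => ?_⟩
      have h1 : Complex.abs (a.1 n + b.1 n) ≤ Complex.abs (a.1 n) + Complex.abs (b.1 n) :=
        Complex.abs.add_le _ _
      calc w.p n * Complex.abs (a.1 n + b.1 n)
          ≤ w.p n * Complex.abs (a.1 n) + w.p n * Complex.abs (b.1 n) := by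
            rw [← mul_add]; exact mul_le_mul_of_nonneg_left h1 (w.pos n).le
        _ ≤ C + D := add_le_add (hC n) (hD n)⟩⟩

instance : Neg w.Ap :=
  ⟨fun a =>
    ⟨fun n => -a.1 n, by
      obtain ⟨C, hC⟩ := a.2
      exact ⟨C, fun n => by simpa using hC n⟩⟩⟩

/-- The weighted Hadamard multiplication `(f ∗ g)(n) = p(n) f̂(n) ĝ(n)`. -/
instance : Mul w.Ap :=
  ⟨fun a b =>
    ⟨fun n => (w.p n : ℂ) * a.1 n * b.1 n, by
      obtain ⟨C, hC⟩ := a.2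
      obtain ⟨D, hD⟩ := b.2
      refine ⟨C * D, fun n => ?_⟩
      have e : w.p n * Complex.abs ((w.p n : ℂ) * a.1 n * b.1 n)
          = (w.p n * Complex.abs (a.1 n)) * (w.p n * Complex.abs (b.1 n)) := by
        rw [map_mul, map_mul, Complex.abs_ofReal, abs_of_pos (w.pos n)]; ring
      rw [e]
      have h0C : (0:ℝ) ≤ C :=
        le_trans (mul_nonneg (w.pos 0).le (Complex.abs.nonneg _)) (hC 0)
      exact mul_le_mul (hC n) (hD n) (mul_nonneg (w.pos n).le (Complex.abs.nonneg _)) h0C⟩⟩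

/-- The identity element `ε`, with coefficients `1/p(n)`. -/
noncomputable instance : One w.Ap :=
  ⟨⟨fun n => ((w.p n : ℂ))⁻¹, 1, fun n => by
      rw [map_inv₀, Complex.abs_ofReal, abs_of_pos (w.pos n),
        mul_inv_cancel₀ (w.pos n).ne']⟩⟩

instance : SMul ℂ w.Ap :=
  ⟨fun c a =>
    ⟨fun n => c * a.1 n, by
      obtain ⟨C, hC⟩ := a.2
      refine ⟨Complex.abs c * C, fun n => ?_⟩
      rw [map_mul]
      calc w.p n * (Complex.abs c * Complex.abs (a.1 n))
          = Complex.abs c * (w.p n * Complex.abs (a.1 n)) := by ring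
        _ ≤ Complex.abs c * C := mul_le_mul_of_nonneg_left (hC n) (Complex.abs.nonneg c)⟩⟩

noncomputable instance : CommRing w.Ap where
  add := (· + ·)
  add_assoc a b c := Subtype.ext (funext fun n => add_assoc _ _ _)
  zero := 0
  zero_add a := Subtype.ext (funext fun n => zero_add _)
  add_zero a := Subtype.ext (funext fun n => add_zero _)
  add_comm a b := Subtype.ext (funext fun n => add_comm _ _)
  nsmul := nsmulRec
  zsmul := zsmulRec
  mul := (· * ·)
  mul_assoc a b c := Subtype.ext (funext fun n => by
    show (w.p n : ℂ) * ((w.p n : ℂ) * a.1 n * b.1 n) * c.1 n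
        = (w.p n : ℂ) * a.1 n * ((w.p n : ℂ) * b.1 n * c.1 n)
    ring)
  one := 1
  one_mul a := Subtype.ext (funext fun n => by
    show (w.p n : ℂ) * ((w.p n : ℂ))⁻¹ * a.1 n = a.1 n
    have h : ((w.p n : ℝ) : ℂ) ≠ 0 := by exact_mod_cast (w.pos n).ne'
    rw [mul_inv_cancel₀ h, one_mul])
  mul_one a := Subtype.ext (funext fun n => by
    show (w.p n : ℂ) * a.1 n * ((w.p n : ℂ))⁻¹ = a.1 n
    have h : ((w.p n : ℝ) : ℂ) ≠ 0 := by exact_mod_cast (w.pos n).ne'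
    field_simp)
  left_distrib a b c := Subtype.ext (funext fun n => by
    show (w.p n : ℂ) * a.1 n * (b.1 n + c.1 n)
        = (w.p n : ℂ) * a.1 n * b.1 n + (w.p n : ℂ) * a.1 n * c.1 n
    ring)
  right_distrib a b c := Subtype.ext (funext fun n => by
    show (w.p n : ℂ) * (a.1 n + b.1 n) * c.1 n
        = (w.p n : ℂ) * a.1 n * c.1 n + (w.p n : ℂ) * b.1 n * c.1 n
    ring)
  zero_mul a := Subtype.ext (funext fun n => by
    show (w.p n : ℂ) * 0 * a.1 n = 0
    ring)
  mul_zero a := Subtype.ext (funext fun n => by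
    show (w.p n : ℂ) * a.1 n * 0 = 0
    ring)
  mul_comm a b := Subtype.ext (funext fun n => by
    show (w.p n : ℂ) * a.1 n * b.1 n = (w.p n : ℂ) * b.1 n * a.1 n
    ring)
  neg := Neg.neg
  neg_add_cancel a := Subtype.ext (funext fun n => neg_add_cancel _)

instance : Module ℂ w.Ap where
  smul := (· • ·)
  one_smul a := Subtype.ext (funext fun n => by
    show (1 : ℂ) * a.1 n = a.1 n
    ring)
  mul_smul c d a := Subtype.ext (funext fun n => by
    show (c * d) * a.1 n = c * (d * a.1 n)
    ring)
  smul_zero c := Subtype.ext (funext fun n => by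
    show c * 0 = 0
    ring)
  smul_add c a b := Subtype.ext (funext fun n => by
    show c * (a.1 n + b.1 n) = c * a.1 n + c * b.1 n
    ring)
  add_smul c d a := Subtype.ext (funext fun n => by
    show (c + d) * a.1 n = c * a.1 n + d * a.1 n
    ring)
  zero_smul a := Subtype.ext (funext fun n => by
    show (0 : ℂ) * a.1 n = 0
    ring)

noncomputable instance : Algebra ℂ w.Ap :=
  Algebra.ofModule
    (fun c a b => Subtype.ext (funext fun n => by
      show (w.p n : ℂ) * (c * a.1 n) * b.1 n = c * ((w.p n : ℂ) * a.1 n * b.1 n)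
      ring))
    (fun c a b => Subtype.ext (funext fun n => by
      show (w.p n : ℂ) * a.1 n * (c * b.1 n) = c * ((w.p n : ℂ) * a.1 n * b.1 n)
      ring))

theorem bddAbove (a : w.Ap) :
    BddAbove (Set.range fun n => w.p n * Complex.abs (a.1 n)) := by
  obtain ⟨C, hC⟩ := a.2
  exact ⟨C, by rintro x ⟨k, rfl⟩; exact hC k⟩

/-- The norm `‖f‖ = sup_n p(n) |f̂(n)|`, as an `AddGroupNorm`. -/
noncomputable def gnorm (w : GoodWeight) : AddGroupNorm w.Ap where
  toFun a := ⨆ n, w.p n * Complex.abs (a.1 n)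
  map_zero' := by
    have h : ∀ n : ℕ, w.p n * Complex.abs ((0 : w.Ap).1 n) = 0 := fun n => by
      show w.p n * Complex.abs 0 = 0; simp
    simp [h]
  add_le' a b := by
    apply ciSup_le
    intro n
    have h1 : Complex.abs (a.1 n + b.1 n) ≤ Complex.abs (a.1 n) + Complex.abs (b.1 n) :=
      Complex.abs.add_le _ _
    calc w.p n * Complex.abs ((a + b).1 n)
        ≤ w.p n * Complex.abs (a.1 n) + w.p n * Complex.abs (b.1 n) := by
          rw [← mul_add]; exact mul_le_mul_of_nonneg_left h1 (w.pos n).le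
      _ ≤ (⨆ k, w.p k * Complex.abs (a.1 k)) + ⨆ k, w.p k * Complex.abs (b.1 k) :=
          add_le_add (le_ciSup (bddAbove a) n) (le_ciSup (bddAbove b) n)
  neg' a := by
    have h : (fun n => w.p n * Complex.abs ((-a).1 n))
        = fun n => w.p n * Complex.abs (a.1 n) := by
      funext n
      show w.p n * Complex.abs (-a.1 n) = w.p n * Complex.abs (a.1 n)
      rw [AbsoluteValue.map_neg]
    show (⨆ n, w.p n * Complex.abs ((-a).1 n)) = ⨆ n, w.p n * Complex.abs (a.1 n)
    rw [h]
  eq_zero_of_map_eq_zero' a h := by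
    apply Subtype.ext
    funext n
    have h1 : w.p n * Complex.abs (a.1 n) ≤ 0 := h ▸ le_ciSup (bddAbove a) n
    have h2 : (0:ℝ) ≤ w.p n * Complex.abs (a.1 n) :=
      mul_nonneg (w.pos n).le (Complex.abs.nonneg _)
    have h3 : Complex.abs (a.1 n) = 0 := by
      rcases mul_eq_zero.mp (le_antisymm h1 h2) with h' | h'
      · exact absurd h' (w.pos n).ne'
      · exact h'
    exact Complex.abs.eq_zero.mp h3

noncomputable instance : NormedAddCommGroup w.Ap :=
  (gnorm w).toNormedAddCommGroup

theorem norm_def (a : w.Ap) : ‖a‖ = ⨆ n, w.p n * Complex.abs (a.1 n) := rfl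

theorem le_norm (a : w.Ap) (n : ℕ) : w.p n * Complex.abs (a.1 n) ≤ ‖a‖ :=
  le_ciSup (bddAbove a) n

theorem norm_nonneg' (a : w.Ap) : 0 ≤ ‖a‖ :=
  le_trans (mul_nonneg (w.pos 0).le (Complex.abs.nonneg _)) (le_norm a 0)

noncomputable instance : NormedCommRing w.Ap :=
  { (inferInstance : NormedAddCommGroup w.Ap), (inferInstance : CommRing w.Ap) with
    norm_mul_le := by
      intro a b
      apply ciSup_le
      intro n
      have e : w.p n * Complex.abs ((a * b).1 n)
          = (w.p n * Complex.abs (a.1 n)) * (w.p n * Complex.abs (b.1 n)) := by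
        show w.p n * Complex.abs ((w.p n : ℂ) * a.1 n * b.1 n) = _
        rw [map_mul, map_mul, Complex.abs_ofReal, abs_of_pos (w.pos n)]; ring
      rw [e]
      exact mul_le_mul (le_norm a n) (le_norm b n)
        (mul_nonneg (w.pos n).le (Complex.abs.nonneg _)) (norm_nonneg' a) }

noncomputable instance : NormedSpace ℂ w.Ap where
  norm_smul_le c a := by
    apply ciSup_le
    intro n
    have e : w.p n * Complex.abs ((c • a).1 n)
        = Complex.abs c * (w.p n * Complex.abs (a.1 n)) := by
      show w.p n * Complex.abs (c * a.1 n) = _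
      rw [map_mul]; ring
    rw [e]
    calc Complex.abs c * (w.p n * Complex.abs (a.1 n))
        ≤ Complex.abs c * ‖a‖ := mul_le_mul_of_nonneg_left (le_norm a n) (Complex.abs.nonneg c)
      _ = ‖c‖ * ‖a‖ := by rw [Complex.norm_eq_abs]

noncomputable instance : NormedAlgebra ℂ w.Ap :=
  { (inferInstance : Algebra ℂ w.Ap) with
    norm_smul_le := fun c a => norm_smul_le c a }

end Ap

end GoodWeight


/-- An element of `A(p)` whose weighted coefficients are bounded below is invertible. -/
theorem GoodWeight.Ap.isUnit_of_bddBelow {w : GoodWeight} (a : w.Ap) (δ : ℝ) (hδ : 0 < δ)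
    (hb : ∀ n, δ ≤ w.p n * Complex.abs (a.1 n)) : IsUnit a := by
  have hane : ∀ n, a.1 n ≠ 0 := by
    intro n hn
    have := hb n
    rw [hn, map_zero, mul_zero] at this
    linarith
  have hpne : ∀ n, ((w.p n : ℝ) : ℂ) ≠ 0 := fun n => by
    exact_mod_cast (w.pos n).ne'
  refine IsUnit.of_mul_eq_one (a := a)
    ⟨fun n => ((w.p n : ℂ))⁻¹ * ((w.p n : ℂ))⁻¹ * (a.1 n)⁻¹, ⟨δ⁻¹, fun n => ?_⟩⟩ ?_
  · have habne : Complex.abs (a.1 n) ≠ 0 := (map_ne_zero Complex.abs).mpr (hane n)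
    have e : w.p n * Complex.abs (((w.p n : ℂ))⁻¹ * ((w.p n : ℂ))⁻¹ * (a.1 n)⁻¹)
        = (w.p n * Complex.abs (a.1 n))⁻¹ := by
      rw [map_mul, map_mul, map_inv₀, map_inv₀, Complex.abs_ofReal,
        abs_of_pos (w.pos n), mul_inv]
      field_simp [(w.pos n).ne', habne]
    rw [e]
    exact inv_anti₀ hδ (hb n)
  · apply Subtype.ext
    funext n
    show (w.p n : ℂ) * a.1 n * (((w.p n : ℂ))⁻¹ * ((w.p n : ℂ))⁻¹ * (a.1 n)⁻¹)
        = ((w.p n : ℂ))⁻¹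
    have e : (w.p n : ℂ) * a.1 n * (((w.p n : ℂ))⁻¹ * ((w.p n : ℂ))⁻¹ * (a.1 n)⁻¹)
        = ((w.p n : ℂ) * ((w.p n : ℂ))⁻¹) * (a.1 n * (a.1 n)⁻¹) * ((w.p n : ℂ))⁻¹ := by
      ring
    rw [e, mul_inv_cancel₀ (hpne n), mul_inv_cancel₀ (hane n), one_mul, one_mul]

/-- The Bass stable rank of `A(p)` is `1`: every unimodular pair is reducible. -/
theorem bassStableRankOne (w : GoodWeight) (hg : w.Grows)
    (f₁ f₂ g₁ g₂ : w.Ap) (h : g₁ * f₁ + g₂ * f₂ = 1) :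
    ∃ h' : w.Ap, IsUnit (f₁ + h' * f₂) := by
  classical
  obtain ⟨C₁, hC₁⟩ := g₁.2
  obtain ⟨C₂, hC₂⟩ := g₂.2
  set C : ℝ := max 1 (max C₁ C₂) with hCdef
  have hC0 : (0:ℝ) < C := lt_of_lt_of_le one_pos (le_max_left _ _)
  have hCne : C ≠ 0 := hC0.ne'
  have hg₁ : ∀ n, w.p n * Complex.abs (g₁.1 n) ≤ C := fun n =>
    le_trans (hC₁ n) (le_trans (le_max_left _ _) (le_max_right _ _))
  have hg₂ : ∀ n, w.p n * Complex.abs (g₂.1 n) ≤ C := fun n =>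
    le_trans (hC₂ n) (le_trans (le_max_right _ _) (le_max_right _ _))
  have hco : ∀ n, (w.p n : ℂ) * g₁.1 n * f₁.1 n + (w.p n : ℂ) * g₂.1 n * f₂.1 n
      = ((w.p n : ℂ))⁻¹ := fun n => congrArg (fun a : w.Ap => a.1 n) h
  have hpne : ∀ n, ((w.p n : ℝ) : ℂ) ≠ 0 := fun n => by exact_mod_cast (w.pos n).ne'
  have key : ∀ n, w.p n * Complex.abs (f₁.1 n) < 1/(2*C) →
      1/(2*C) ≤ w.p n * Complex.abs (f₂.1 n) := by
    intro n hn
    have e : (w.p n : ℂ) * ((w.p n : ℂ) * g₂.1 n * f₂.1 n)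
        = 1 - (w.p n : ℂ) * ((w.p n : ℂ) * g₁.1 n * f₁.1 n) := by
      have := congrArg (fun z => (w.p n : ℂ) * z) (hco n)
      beta_reduce at this
      rw [mul_add] at this
      rw [mul_inv_cancel₀ (hpne n)] at this
      linear_combination this
    have h1 : Complex.abs ((w.p n : ℂ) * ((w.p n : ℂ) * g₁.1 n * f₁.1 n)) ≤ 1/2 := by
      have e1 : Complex.abs ((w.p n : ℂ) * ((w.p n : ℂ) * g₁.1 n * f₁.1 n))
          = (w.p n * Complex.abs (g₁.1 n)) * (w.p n * Complex.abs (f₁.1 n)) := by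
        rw [map_mul, map_mul, map_mul, Complex.abs_ofReal, abs_of_pos (w.pos n)]; ring
      rw [e1]
      calc (w.p n * Complex.abs (g₁.1 n)) * (w.p n * Complex.abs (f₁.1 n))
          ≤ C * (1/(2*C)) :=
            mul_le_mul (hg₁ n) hn.le
              (mul_nonneg (w.pos n).le (Complex.abs.nonneg _)) hC0.le
        _ = 1/2 := by field_simp
    have h2 : (1:ℝ)/2 ≤ Complex.abs ((w.p n : ℂ) * ((w.p n : ℂ) * g₂.1 n * f₂.1 n)) := by
      rw [e]
      have hnn := norm_sub_norm_le (1:ℂ) ((w.p n : ℂ) * ((w.p n : ℂ) * g₁.1 n * f₁.1 n))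
      simp only [Complex.norm_eq_abs, norm_one] at hnn
      linarith
    have h3 : Complex.abs ((w.p n : ℂ) * ((w.p n : ℂ) * g₂.1 n * f₂.1 n))
        = (w.p n * Complex.abs (g₂.1 n)) * (w.p n * Complex.abs (f₂.1 n)) := by
      rw [map_mul, map_mul, map_mul, Complex.abs_ofReal, abs_of_pos (w.pos n)]; ring
    rw [h3] at h2
    by_contra hcon
    push_neg at hcon
    have hnn2 : (0:ℝ) ≤ w.p n * Complex.abs (f₂.1 n) :=
      mul_nonneg (w.pos n).le (Complex.abs.nonneg _)
    have hb : (w.p n * Complex.abs (g₂.1 n)) * (w.p n * Complex.abs (f₂.1 n)) < 1/2 := by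
      calc (w.p n * Complex.abs (g₂.1 n)) * (w.p n * Complex.abs (f₂.1 n))
          ≤ C * (w.p n * Complex.abs (f₂.1 n)) :=
            mul_le_mul_of_nonneg_right (hg₂ n) hnn2
        _ < C * (1/(2*C)) := mul_lt_mul_of_pos_left hcon hC0
        _ = 1/2 := by field_simp
    linarith
  set hfun : ℕ → ℂ := fun n =>
    if 1/(2*C) ≤ w.p n * Complex.abs (f₁.1 n) then 0
    else (((1/(2*C*w.p n) : ℝ) : ℂ) - f₁.1 n) / ((w.p n : ℂ) * f₂.1 n) with hfdef
  have hval : ∀ n, hfun n =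
      if 1/(2*C) ≤ w.p n * Complex.abs (f₁.1 n) then 0
      else (((1/(2*C*w.p n) : ℝ) : ℂ) - f₁.1 n) / ((w.p n : ℂ) * f₂.1 n) := fun n => rfl
  have htpos : ∀ n, (0:ℝ) < 1/(2*C*w.p n) := fun n => by
    have := w.pos n; positivity
  have hf₂ne : ∀ n, w.p n * Complex.abs (f₁.1 n) < 1/(2*C) → f₂.1 n ≠ 0 := by
    intro n hcase hz
    have hf₂ := key n hcase
    rw [hz, map_zero, mul_zero] at hf₂
    have : (0:ℝ) < 1/(2*C) := by positivity
    linarith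
  have he1 : ∀ n, w.p n * (1/(2*C*w.p n)) = 1/(2*C) := fun n => by
    have hpn : w.p n ≠ 0 := (w.pos n).ne'
    field_simp
  have hbound : ∀ n, w.p n * Complex.abs (hfun n) ≤ 2 := by
    intro n
    by_cases hcase : 1/(2*C) ≤ w.p n * Complex.abs (f₁.1 n)
    · rw [hval n, if_pos hcase, map_zero, mul_zero]; norm_num
    · push_neg at hcase
      have hf₂ := key n hcase
      rw [hval n, if_neg (not_le.mpr hcase), map_div₀, map_mul, Complex.abs_ofReal,
        abs_of_pos (w.pos n)]
      have habs : Complex.abs (((1/(2*C*w.p n) : ℝ) : ℂ) - f₁.1 n)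
          ≤ 1/(2*C*w.p n) + Complex.abs (f₁.1 n) := by
        calc Complex.abs (((1/(2*C*w.p n) : ℝ) : ℂ) - f₁.1 n)
            ≤ Complex.abs (((1/(2*C*w.p n) : ℝ) : ℂ)) + Complex.abs (f₁.1 n) :=
              Complex.abs.sub_le_add _ _
          _ = 1/(2*C*w.p n) + Complex.abs (f₁.1 n) := by
              rw [Complex.abs_ofReal, abs_of_pos (htpos n)]
      have hden : (0:ℝ) < w.p n * Complex.abs (f₂.1 n) :=
        lt_of_lt_of_le (by positivity) hf₂
      rw [← mul_div_assoc, div_le_iff₀ hden]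
      calc w.p n * Complex.abs (((1/(2*C*w.p n) : ℝ) : ℂ) - f₁.1 n)
          ≤ w.p n * (1/(2*C*w.p n)) + w.p n * Complex.abs (f₁.1 n) := by
            rw [← mul_add]; exact mul_le_mul_of_nonneg_left habs (w.pos n).le
        _ ≤ 1/(2*C) + 1/(2*C) := by rw [he1 n]; linarith
        _ = 2 * (1/(2*C)) := by ring
        _ ≤ 2 * (w.p n * Complex.abs (f₂.1 n)) :=
            mul_le_mul_of_nonneg_left hf₂ (by norm_num)
  refine ⟨⟨hfun, 2, hbound⟩, ?_⟩
  apply GoodWeight.Ap.isUnit_of_bddBelow _ (1/(2*C)) (by positivity)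
  intro n
  show 1/(2*C) ≤ w.p n * Complex.abs (f₁.1 n + (w.p n : ℂ) * hfun n * f₂.1 n)
  by_cases hcase : 1/(2*C) ≤ w.p n * Complex.abs (f₁.1 n)
  · rw [hval n, if_pos hcase, mul_zero, zero_mul, add_zero]
    exact hcase
  · push_neg at hcase
    have hf₂ := key n hcase
    have hne := hf₂ne n hcase
    rw [hval n, if_neg (not_le.mpr hcase)]
    have e : f₁.1 n + (w.p n : ℂ) *
        ((((1/(2*C*w.p n) : ℝ) : ℂ) - f₁.1 n) / ((w.p n : ℂ) * f₂.1 n)) * f₂.1 n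
        = ((1/(2*C*w.p n) : ℝ) : ℂ) := by
      have hCc : (C : ℂ) ≠ 0 := by exact_mod_cast hCne
      field_simp [hpne n, hne]
      ring
    rw [e, Complex.abs_ofReal, abs_of_pos (htpos n), he1 n]
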